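/- Let D be the closed unit disk in ℝ², and let H₁, …, H_m (m ≥ 1) be open Euclidean disks whose closures are pairwise disjoint and contained in the open unit disk. Set Ω = D \ (H₁ ∪ … ∪ H_m). Then there exists a continuous map r : Ω → ∂H₁ (the boundary circle of H₁) such that r(x) = x for every x ∈ ∂H₁; that is, Ω admits a retraction onto the boundary circle of the first hole. -/

import Mathlib

open Metric Set

/-- The closed unit disk in `ℝ²` with `m ≥ 1` open holes (open disks whose
closures are pairwise disjoint and contained in the open unit disk) removed retracts onto
the boundary circle of the first hole. -/
theorem retraction_of_holed_disk_onto_first_hole_boundary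
    (m : ℕ) (hm : 0 < m)
    (c : Fin m → EuclideanSpace ℝ (Fin 2)) (ρ : Fin m → ℝ)
    (hρ : ∀ i, 0 < ρ i)
    (hsub : ∀ i, closure (ball (c i) (ρ i)) ⊆ ball (0 : EuclideanSpace ℝ (Fin 2)) 1)
    (hdisj : ∀ i j, i ≠ j →
      Disjoint (closure (ball (c i) (ρ i))) (closure (ball (c j) (ρ j))))
    (Ω : Set (EuclideanSpace ℝ (Fin 2)))
    (hΩ : Ω = closedBall (0 : EuclideanSpace ℝ (Fin 2)) 1 \ ⋃ i, ball (c i) (ρ i)) :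
    ∃ r : EuclideanSpace ℝ (Fin 2) → EuclideanSpace ℝ (Fin 2),
      ContinuousOn r Ω ∧
      r '' Ω ⊆ frontier (ball (c ⟨0, hm⟩) (ρ ⟨0, hm⟩)) ∧
      ∀ x ∈ frontier (ball (c ⟨0, hm⟩) (ρ ⟨0, hm⟩)), r x = x := by
  set i0 : Fin m := ⟨0, hm⟩
  set c0 := c i0
  set ρ0 := ρ i0
  have hρ0 : 0 < ρ0 := hρ i0
  have hfr : frontier (ball c0 ρ0) = sphere c0 ρ0 := frontier_ball c0 hρ0.ne'
  -- radial projection from c0 onto the sphere of radius ρ0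
  refine ⟨fun x => c0 + (ρ0 / ‖x - c0‖) • (x - c0), ?_, ?_, ?_⟩
  · -- continuity on Ω: x ∈ Ω ⇒ x ∉ ball c0 ρ0 ⇒ ‖x - c0‖ ≠ 0
    have hne : ∀ x ∈ Ω, ‖x - c0‖ ≠ 0 := by
      intro x hx
      rw [hΩ] at hx
      have hxb : x ∉ ball c0 ρ0 := fun h => hx.2 (mem_iUnion.mpr ⟨i0, h⟩)
      have : ρ0 ≤ dist x c0 := by
        by_contra h
        exact hxb (mem_ball.mpr (lt_of_not_ge h))
      have : (0:ℝ) < ‖x - c0‖ := by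
        rw [← dist_eq_norm]; exact hρ0.trans_le this
      exact this.ne'
    apply ContinuousOn.add continuousOn_const
    apply ContinuousOn.smul (f := fun x => ρ0 / ‖x - c0‖) (g := fun x => x - c0)
    · exact (continuousOn_const.div ((continuousOn_id.sub continuousOn_const).norm)
        (fun x hx => hne x hx))
    · exact continuousOn_id.sub continuousOn_const
  · -- image in the sphere
    rw [hfr]
    rintro _ ⟨x, hx, rfl⟩
    have hxb : x ∉ ball c0 ρ0 := by
      rw [hΩ] at hx; exact fun h => hx.2 (mem_iUnion.mpr ⟨i0, h⟩)
    have hd : ρ0 ≤ dist x c0 := by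
      by_contra h
      exact hxb (mem_ball.mpr (lt_of_not_ge h))
    have hpos : (0:ℝ) < ‖x - c0‖ := by
      rw [← dist_eq_norm]; exact hρ0.trans_le hd
    simp only [mem_sphere, dist_eq_norm]
    rw [add_sub_cancel_left, norm_smul, Real.norm_eq_abs, abs_div,
      abs_of_pos hρ0, abs_of_pos hpos, div_mul_cancel₀ _ hpos.ne']
  · -- identity on the sphere
    rw [hfr]
    intro x hx
    have : ‖x - c0‖ = ρ0 := by
      rw [← dist_eq_norm]; exact mem_sphere.mp hx
    show c0 + (ρ0 / ‖x - c0‖) • (x - c0) = x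
    rw [this, div_self hρ0.ne', one_smul, add_sub_cancel]
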